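/- For all real constants b₁, b₂, κ₁, κ₂, the path x(t) = R(t)·(−t²/4 + b₁ t + b₂, t/2 − b₁ − 1)ᵀ + (κ₁, κ₂)ᵀ satisfies x''(t) = R(t)·((−1, −1/2)ᵀ + M(t)·x'(t)) with M(t) = ((sin t, −cos t), ((3/2)cos t, (3/2)sin t)), for all t ∈ ℝ. -/

import Mathlib

open Real

noncomputable def rot (t : ℝ) (p : ℝ × ℝ) : ℝ × ℝ :=
  (Real.cos t * p.1 - Real.sin t * p.2, Real.sin t * p.1 + Real.cos t * p.2)

theorem stmt_9 (b₁ b₂ κ₁ κ₂ : ℝ) (x : ℝ → ℝ × ℝ)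
    (hx : ∀ t : ℝ, x t =
      rot t (-t^2/4 + b₁ * t + b₂, t/2 - b₁ - 1) + (κ₁, κ₂)) :
    ∀ t : ℝ,
      deriv (deriv x) t =
        rot t ((-1, -1/2) +
          (sin t * (deriv x t).1 - cos t * (deriv x t).2,
           (3/2) * cos t * (deriv x t).1 + (3/2) * sin t * (deriv x t).2)) := by
  -- explicit form of x
  have hxe : x = fun t : ℝ =>
      (Real.cos t * (-t^2/4 + b₁ * t + b₂) - Real.sin t * (t/2 - b₁ - 1) + κ₁,
       Real.sin t * (-t^2/4 + b₁ * t + b₂) + Real.cos t * (t/2 - b₁ - 1) + κ₂) := by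
    funext t
    rw [hx t]
    simp [rot, Prod.ext_iff]
  -- P and Q derivatives
  have hP : ∀ t : ℝ, HasDerivAt (fun t : ℝ => -t^2/4 + b₁ * t + b₂) (-t/2 + b₁) t := by
    intro t
    have : HasDerivAt (fun t : ℝ => -t^2/4 + b₁ * t + b₂)
        (-((2:ℕ) * t^(2-1))/4 + b₁ * 1) t :=
      (((hasDerivAt_pow 2 t).neg.div_const 4).add
        ((hasDerivAt_id t).const_mul b₁)).add_const b₂
    convert this using 1; push_cast; ring
  have hQ : ∀ t : ℝ, HasDerivAt (fun t : ℝ => t/2 - b₁ - 1) (1/2 : ℝ) t := by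
    intro t
    exact (((hasDerivAt_id t).div_const 2).sub_const b₁).sub_const 1
  -- first derivative
  have hd1 : ∀ t : ℝ, HasDerivAt x
      (-Real.sin t * (-t^2/4 + b₁ * t + b₂) + Real.cos t * (-t/2 + b₁)
        - (Real.cos t * (t/2 - b₁ - 1) + Real.sin t * (1/2)),
       Real.cos t * (-t^2/4 + b₁ * t + b₂) + Real.sin t * (-t/2 + b₁)
        + (-Real.sin t * (t/2 - b₁ - 1) + Real.cos t * (1/2))) t := by
    intro t
    rw [hxe]
    exact HasDerivAt.prodMk
      (((((hasDerivAt_cos t).mul (hP t)).sub ((hasDerivAt_sin t).mul (hQ t))).add_const κ₁))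
      (((((hasDerivAt_sin t).mul (hP t)).add ((hasDerivAt_cos t).mul (hQ t))).add_const κ₂))
  have hdx : deriv x = fun t : ℝ =>
      (-Real.sin t * (-t^2/4 + b₁ * t + b₂) + Real.cos t * (-t/2 + b₁)
        - (Real.cos t * (t/2 - b₁ - 1) + Real.sin t * (1/2)),
       Real.cos t * (-t^2/4 + b₁ * t + b₂) + Real.sin t * (-t/2 + b₁)
        + (-Real.sin t * (t/2 - b₁ - 1) + Real.cos t * (1/2))) := by
    funext t; exact (hd1 t).deriv
  -- second derivative
  have hd2 : ∀ t : ℝ, HasDerivAt (deriv x)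
      (-Real.cos t * (-t^2/4 + b₁ * t + b₂) - 2 * Real.sin t * (-t/2 + b₁)
        + Real.sin t * (t/2 - b₁ - 1) - (3/2) * Real.cos t,
       -Real.sin t * (-t^2/4 + b₁ * t + b₂) + 2 * Real.cos t * (-t/2 + b₁)
        - Real.cos t * (t/2 - b₁ - 1) - (3/2) * Real.sin t) t := by
    intro t
    rw [hdx]
    have h1 : HasDerivAt (fun t : ℝ =>
        -Real.sin t * (-t^2/4 + b₁ * t + b₂) + Real.cos t * (-t/2 + b₁)
        - (Real.cos t * (t/2 - b₁ - 1) + Real.sin t * (1/2)))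
        ((-Real.cos t * (-t^2/4 + b₁ * t + b₂) + (-Real.sin t) * (-t/2 + b₁))
          + ((-Real.sin t) * (-t/2 + b₁) + Real.cos t * (-1/2))
          - ((-Real.sin t * (t/2 - b₁ - 1) + Real.cos t * (1/2))
            + Real.cos t * (1/2))) t := by
      refine HasDerivAt.sub (HasDerivAt.add ?_ ?_) (HasDerivAt.add ?_ ?_)
      · exact ((hasDerivAt_sin t).neg.mul (hP t))
      · have hP' : HasDerivAt (fun t : ℝ => -t/2 + b₁) (-1/2 : ℝ) t := by
          exact (((hasDerivAt_id t).neg.div_const 2).add_const b₁)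
        exact (hasDerivAt_cos t).mul hP'
      · exact (hasDerivAt_cos t).mul (hQ t)
      · exact (hasDerivAt_sin t).mul_const (1/2)
    have h2 : HasDerivAt (fun t : ℝ =>
        Real.cos t * (-t^2/4 + b₁ * t + b₂) + Real.sin t * (-t/2 + b₁)
        + (-Real.sin t * (t/2 - b₁ - 1) + Real.cos t * (1/2)))
        (((-Real.sin t) * (-t^2/4 + b₁ * t + b₂) + Real.cos t * (-t/2 + b₁))
          + (Real.cos t * (-t/2 + b₁) + Real.sin t * (-1/2))
          + ((-Real.cos t * (t/2 - b₁ - 1) + (-Real.sin t) * (1/2))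
            + (-Real.sin t) * (1/2))) t := by
      refine HasDerivAt.add (HasDerivAt.add ?_ ?_) (HasDerivAt.add ?_ ?_)
      · exact ((hasDerivAt_cos t).mul (hP t))
      · have hP' : HasDerivAt (fun t : ℝ => -t/2 + b₁) (-1/2 : ℝ) t := by
          exact (((hasDerivAt_id t).neg.div_const 2).add_const b₁)
        exact (hasDerivAt_sin t).mul hP'
      · exact (hasDerivAt_sin t).neg.mul (hQ t)
      · exact (hasDerivAt_cos t).mul_const (1/2)
    have := h1.prodMk h2
    convert this using 2 <;> ring
  intro t
  rw [(hd2 t).deriv, hdx]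
  have pyth := Real.sin_sq_add_cos_sq t
  simp only [rot, Prod.mk_add_mk, Prod.ext_iff]
  constructor
  · linear_combination (Real.cos t * ((-t^2/4 + b₁ * t + b₂) + 1/2)
      + (3/2) * Real.sin t * ((-t/2 + b₁) - (t/2 - b₁ - 1))) * pyth
  · linear_combination (Real.sin t * ((-t^2/4 + b₁ * t + b₂) + 1/2)
      - (3/2) * Real.cos t * ((-t/2 + b₁) - (t/2 - b₁ - 1))) * pyth
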